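/- arXiv:2308.12239 — 2 statements merged into one kernel-verified Lean document; each statement's English description precedes it below -/
import Mathlib

section
/- Every rank-2 matroid M satisfying |X|/r(X) ≤ |E(M)|/2 for all nonempty X ⊆ E(M) is cyclically orderable: there is a cyclic permutation e1 e2 ... em of E(M) such that every 2 consecutive elements (cyclically) form a basis. -/
open Set

variable {α : Type*}

/-- The rank of a set `X` in a matroid: size of a largest independent subset of `X`. -/
noncomputable def Matroid.rkSet (M : Matroid α) (X : Set α) : ℕ :=
  sSup {n | ∃ I, M.Indep I ∧ I ⊆ X ∧ I.ncard = n}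

/-- The rank of a matroid. -/
noncomputable def Matroid.rank (M : Matroid α) : ℕ := M.rkSet M.E

/-- A circuit is a minimal dependent set. -/
def Matroid.IsCircuitMin (M : Matroid α) (C : Set α) : Prop :=
  M.Dep C ∧ ∀ D, D ⊂ C → M.Indep D

/-- A paving matroid: every circuit has size at least the rank. -/
def Matroid.Paving (M : Matroid α) : Prop :=
  ∀ C, M.IsCircuitMin C → M.rank ≤ C.ncard

/-- Deletion of a set from a matroid. -/
noncomputable def Matroid.del (M : Matroid α) (D : Set α) : Matroid α :=
  M.restrict (M.E \ D)

/-- A cyclic ordering of a matroid, given as a list: every `M.rank`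
cyclically-consecutive entries form a base. -/
def Matroid.IsCyclicOrdering (M : Matroid α) (l : List α) : Prop :=
  l.Nodup ∧ {x | x ∈ l} = M.E ∧
    ∀ i : ℕ, M.IsBase {x | x ∈ (l.rotate i).take M.rank}

section Aux

lemma stmt12_noloops (M : Matroid α) [M.Finite] {e : α} (he : e ∈ M.E)
    (hγ : ∀ X ⊆ M.E, X.Nonempty → X.ncard * 2 ≤ M.E.ncard * M.rkSet X) : M.Indep {e} := by
  have h1 := hγ {e} (by simpa using he) ⟨e, rfl⟩
  simp only [Set.ncard_singleton, one_mul] at h1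
  set S := {n | ∃ I, M.Indep I ∧ I ⊆ ({e} : Set α) ∧ I.ncard = n} with hS
  have hbdd : ∀ n ∈ S, n ≤ 1 := by
    rintro n ⟨I, hI, hIe, rfl⟩
    calc I.ncard ≤ ({e} : Set α).ncard := Set.ncard_le_ncard hIe (Set.finite_singleton e)
    _ = 1 := Set.ncard_singleton e
  have hne : S.Nonempty := ⟨0, ∅, M.empty_indep, by simp⟩
  have hmem : sSup S ∈ S := Nat.sSup_mem hne ⟨1, hbdd⟩
  have hpos : sSup S ≠ 0 := by
    intro h0
    rw [Matroid.rkSet, ← hS, h0, mul_zero] at h1; omega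
  obtain ⟨I, hI, hIe, hIc⟩ := hmem
  have : I = {e} := by
    rcases Set.subset_singleton_iff_eq.1 hIe with h | h
    · exfalso; rw [h] at hIc; simp at hIc; omega
    · exact h
  rwa [this] at hI

lemma stmt12_indep_card_le (M : Matroid α) [M.Finite] (hr : M.rank = 2) {I : Set α}
    (hI : M.Indep I) : I.ncard ≤ 2 := by
  have hIE : I ⊆ M.E := hI.subset_ground
  have hm : I.ncard ∈ {n | ∃ I, M.Indep I ∧ I ⊆ M.E ∧ I.ncard = n} := ⟨I, hI, hIE, rfl⟩
  have hb : BddAbove {n | ∃ I, M.Indep I ∧ I ⊆ M.E ∧ I.ncard = n} := by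
    refine ⟨M.E.ncard, ?_⟩
    rintro n ⟨J, hJ, hJE, rfl⟩
    exact Set.ncard_le_ncard hJE M.ground_finite
  have := le_csSup hb hm
  rwa [show sSup {n | ∃ I, M.Indep I ∧ I ⊆ M.E ∧ I.ncard = n} = 2 from hr] at this

lemma stmt12_pair_base (M : Matroid α) [M.Finite] (hr : M.rank = 2) {a b : α}
    (hab : a ≠ b) (hI : M.Indep {a, b}) : M.IsBase {a, b} := by
  refine hI.isBase_of_maximal fun J hJ hsub => ?_
  have hJfin : J.Finite := M.ground_finite.subset hJ.subset_ground
  refine Set.eq_of_subset_of_ncard_le hsub ?_ hJfin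
  calc J.ncard ≤ 2 := stmt12_indep_card_le M hr hJ
  _ = ({a, b} : Set α).ncard := (Set.ncard_pair hab).symm

lemma stmt12_dep_iff_closure_eq (M : Matroid α) {a b : α} (hb : b ∈ M.E)
    (hab : a ≠ b) (hia : M.Indep {a}) (hib : M.Indep {b}) :
    M.Dep {a, b} ↔ M.closure {a} = M.closure {b} := by
  constructor
  · intro hd
    have h1 : b ∈ M.closure {a} := by
      have := hia.insert_dep_iff (e := b)
      rw [Set.pair_comm] at hd
      exact ((this.1 hd).1)
    have h2 : a ∈ M.closure {b} := by
      have := hib.insert_dep_iff (e := a)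
      exact ((this.1 hd).1)
    have hba : M.closure {b} ⊆ M.closure {a} :=
      M.closure_subset_closure_of_subset_closure (by simpa using h1)
    have hab' : M.closure {a} ⊆ M.closure {b} :=
      M.closure_subset_closure_of_subset_closure (by simpa using h2)
    exact hab'.antisymm hba
  · intro hcl
    have hbc : b ∈ M.closure {a} := by
      rw [hcl]; exact M.mem_closure_self b hb
    have := hia.insert_dep_iff (e := b)
    rw [Set.pair_comm]
    exact this.2 ⟨hbc, by simpa using hab.symm⟩

lemma stmt12_fiber_bound (M : Matroid α) [M.Finite] {e : α} (he : e ∈ M.E)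
    (hloops : ∀ x ∈ M.E, M.Indep {x})
    (hdep : ∀ a ∈ M.E, ∀ b ∈ M.E, a ≠ b → M.closure {a} = M.closure {b} → M.Dep {a, b})
    (hγ : ∀ X ⊆ M.E, X.Nonempty → X.ncard * 2 ≤ M.E.ncard * M.rkSet X) :
    2 * {x ∈ M.E | M.closure {x} = M.closure {e}}.ncard ≤ M.E.ncard := by
  set F := {x ∈ M.E | M.closure {x} = M.closure {e}} with hF
  have hFE : F ⊆ M.E := fun x hx => hx.1
  have h1 := hγ F hFE ⟨e, he, rfl⟩
  have hrk : M.rkSet F = 1 := by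
    rw [Matroid.rkSet]
    apply le_antisymm
    · have hne : {n | ∃ I, M.Indep I ∧ I ⊆ F ∧ I.ncard = n}.Nonempty :=
        ⟨0, ⟨∅, M.empty_indep, by simp⟩⟩
      apply csSup_le hne
      rintro n ⟨I, hI, hIF, rfl⟩
      by_contra hn
      push_neg at hn
      have hIfin : I.Finite := M.ground_finite.subset (hIF.trans hFE)
      obtain ⟨a, ha, b, hb, hab⟩ := (Set.one_lt_ncard hIfin).mp hn
      have hd := hdep a (hFE (hIF ha)) b (hFE (hIF hb)) hab
        (((hIF ha).2).trans ((hIF hb).2).symm)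
      exact hd.1 (hI.subset (by simp [Set.insert_subset_iff, ha, hb]))
    · apply le_csSup
      · refine ⟨M.E.ncard, ?_⟩
        rintro n ⟨I, hI, hIF, rfl⟩
        exact Set.ncard_le_ncard (hIF.trans hFE) M.ground_finite
      · exact ⟨{e}, hloops e he, by simp [hF, he], Set.ncard_singleton e⟩
  rw [hrk, mul_one] at h1
  omega

lemma stmt12_take_two_set (r : List α) (d : α) (h2 : 2 ≤ r.length) :
    {x | x ∈ r.take 2} = {r.getD 0 d, r.getD 1 d} := by
  match r with
  | a :: b :: t => ext x; simp [List.take]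
  | [] => simp at h2
  | [a] => simp at h2

lemma stmt12_skeleton (M : Matroid α) (hr : M.rank = 2) (L : List α) (d : α)
    (hL2 : 2 ≤ L.length) (hnd : L.Nodup) (hmem : {x | x ∈ L} = M.E)
    (f : ℕ → ℕ)
    (hfb : ∀ j < L.length, f j < L.length)
    (hfinj : ∀ i < L.length, ∀ j < L.length, f i = f j → i = j)
    (hfs : ∀ i < L.length, ∃ j < L.length, f j = i)
    (hbase : ∀ j < L.length, M.IsBase {L.getD (f j) d, L.getD (f ((j + 1) % L.length)) d}) :
    ∃ l, M.IsCyclicOrdering l := by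
  set m := L.length with hm
  set g : ℕ → α := fun j => L.getD (f j) d with hg
  refine ⟨(List.range m).map g, ?_, ?_, ?_⟩
  · refine List.Nodup.map_on ?_ List.nodup_range
    intro i hi j hj hij
    rw [List.mem_range] at hi hj
    apply hfinj i hi j hj
    have h1 : g i = L[f i]'(hfb i hi) := List.getD_eq_getElem L d (hfb i hi)
    have h2 : g j = L[f j]'(hfb j hj) := List.getD_eq_getElem L d (hfb j hj)
    rw [h1, h2] at hij
    exact (List.Nodup.getElem_inj_iff hnd).mp hij
  · rw [← hmem]
    ext x
    simp only [Set.mem_setOf_eq, List.mem_map, List.mem_range]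
    constructor
    · rintro ⟨j, hj, rfl⟩
      rw [hg]
      simp only
      rw [List.getD_eq_getElem L d (hfb j hj)]
      exact List.getElem_mem _
    · intro hx
      obtain ⟨i, hi, rfl⟩ := List.getElem_of_mem hx
      obtain ⟨j, hj, hfj⟩ := hfs i hi
      exact ⟨j, hj, by rw [hg]; simp only; rw [hfj, List.getD_eq_getElem L d hi]⟩
  · intro i
    rw [hr]
    have hlen : ((List.range m).map g).length = m := by simp
    have hrl : (((List.range m).map g).rotate i).length = m := by simp
    rw [stmt12_take_two_set _ d (by omega)]
    have hget : ∀ k (hk : k < m),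
        (((List.range m).map g).rotate i).getD k d = g ((k + i) % m) := by
      intro k hk
      rw [List.getD_eq_getElem _ d (by omega)]
      simp [List.getElem_rotate, hlen]
    rw [hget 0 (by omega), hget 1 (by omega)]
    simp only [Nat.zero_add]
    have hbase' := hbase (i % m) (Nat.mod_lt _ (by omega))
    have he : (1 + i) % m = ((i % m) + 1) % m := by
      rw [Nat.mod_add_mod, Nat.add_comm]
    rw [he]
    have h1 : g (i % m) = L.getD (f (i % m)) d := rfl
    have h2 : g ((i % m + 1) % m) = L.getD (f ((i % m + 1) % m)) d := rfl
    rw [h1, h2]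
    exact hbase'

end Aux

/-- The rank-2 case of the main theorem: every rank-2 matroid with
`γ(M) = β(E(M))` is cyclically orderable. -/
theorem stmt12 (M : Matroid α) [M.Finite] (hr : M.rank = 2) (hm : 2 ≤ M.E.ncard)
    (hγ : ∀ X ⊆ M.E, X.Nonempty → X.ncard * 2 ≤ M.E.ncard * M.rkSet X) :
    ∃ l : List α, M.IsCyclicOrdering l := by
  classical
  have hfin : M.E.Finite := M.ground_finite
  set m := M.E.ncard with hmdef
  obtain ⟨d, hd⟩ : M.E.Nonempty := Set.nonempty_of_ncard_ne_zero (by omega)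
  have hloops : ∀ x ∈ M.E, M.Indep {x} := fun x hx => stmt12_noloops M hx hγ
  have hdepcl : ∀ a ∈ M.E, ∀ b ∈ M.E, a ≠ b →
      (M.Dep {a, b} ↔ M.closure {a} = M.closure {b}) :=
    fun a ha b hb hab => stmt12_dep_iff_closure_eq M hb hab (hloops a ha) (hloops b hb)
  have hbase2 : ∀ a ∈ M.E, ∀ b ∈ M.E, M.closure {a} ≠ M.closure {b} → M.IsBase {a, b} := by
    intro a ha b hb hne
    have hab : a ≠ b := by rintro rfl; exact hne rfl
    have hdep' : ¬ M.Dep {a, b} := fun hdp => hne (((hdepcl a ha b hb hab).1) hdp)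
    have hind : M.Indep {a, b} :=
      M.indep_of_not_dep hdep' (by simp [Set.insert_subset_iff, ha, hb])
    exact stmt12_pair_base M hr hab hind
  set E' : Finset α := hfin.toFinset with hE'
  have hE'mem : ∀ x, x ∈ E' ↔ x ∈ M.E := fun x => hfin.mem_toFinset
  have hE'card : E'.card = m := by rw [hmdef, Set.ncard_eq_toFinset_card M.E hfin]
  have hfibcard : ∀ e ∈ M.E,
      2 * (E'.filter (fun x => M.closure {x} = M.closure {e})).card ≤ m := by
    intro e he
    have h1 := stmt12_fiber_bound M he hloops
      (fun a ha b hb hab hc => ((hdepcl a ha b hb hab).2 hc)) hγ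
    have h2 : {x ∈ M.E | M.closure {x} = M.closure {e}}
        = ↑(E'.filter (fun x => M.closure {x} = M.closure {e})) := by
      ext x; simp [hE'mem]
    rwa [h2, Set.ncard_coe_finset] at h1
  set h : ℕ := (m + 1) / 2 with hh
  -- the interleaving function
  set f : ℕ → ℕ := fun j => if j % 2 = 0 then j / 2 else h + j / 2 with hfdef
  have hfeven : ∀ j, j % 2 = 0 → f j = j / 2 := by intro j hj; simp [hfdef, hj]
  have hfodd : ∀ j, j % 2 = 1 → f j = h + j / 2 := by
    intro j hj; simp [hfdef, hj]
  have hfb : ∀ j < m, f j < m := by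
    intro j hj
    rcases Nat.mod_two_eq_zero_or_one j with hp | hp
    · rw [hfeven j hp]; omega
    · rw [hfodd j hp]; omega
  have hfinj : ∀ i < m, ∀ j < m, f i = f j → i = j := by
    intro i hi j hj heq
    rcases Nat.mod_two_eq_zero_or_one i with hp | hp <;>
      rcases Nat.mod_two_eq_zero_or_one j with hq | hq
    · rw [hfeven i hp, hfeven j hq] at heq; omega
    · rw [hfeven i hp, hfodd j hq] at heq; omega
    · rw [hfodd i hp, hfeven j hq] at heq; omega
    · rw [hfodd i hp, hfodd j hq] at heq; omega
  have hfs : ∀ i < m, ∃ j < m, f j = i := by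
    intro i hi
    by_cases hih : i < h
    · exact ⟨2 * i, by omega, by rw [hfeven (2 * i) (by omega)]; omega⟩
    · exact ⟨2 * (i - h) + 1, by omega, by rw [hfodd (2 * (i - h) + 1) (by omega)]; omega⟩
  -- the main glue
  have main : ∀ L : List α, L.length = m → L.Nodup → {x | x ∈ L} = M.E →
      (∀ j < m, M.closure {L.getD (f j) d} ≠ M.closure {L.getD (f ((j + 1) % m)) d}) →
      ∃ l, M.IsCyclicOrdering l := by
    intro L hlen hnd hmemL hadj
    have hmemE : ∀ p < m, L.getD p d ∈ M.E := by
      intro p hp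
      rw [← hmemL]
      have hx : L.getD p d = L[p]'(by omega) := List.getD_eq_getElem L d (by omega)
      rw [hx]
      exact List.getElem_mem _
    refine stmt12_skeleton M hr L d (by omega) hnd hmemL f
      (by rw [hlen]; exact hfb) (by rw [hlen]; exact hfinj) (by rw [hlen]; exact hfs) ?_
    intro j hj
    rw [hlen] at hj ⊢
    have hjm : (j + 1) % m < m := Nat.mod_lt _ (by omega)
    exact hbase2 _ (hmemE _ (hfb j hj)) _ (hmemE _ (hfb _ hjm)) (hadj j hj)
  by_cases hcaseB : ∃ e ∈ M.E, 2 * (E'.filter (fun x => M.closure {x} = M.closure {e})).card = m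
  · -- Case B : a parallel class of size exactly m/2; put it first
    obtain ⟨e, he, hecard⟩ := hcaseB
    set A := E'.filter (fun x => M.closure {x} = M.closure {e}) with hA
    have hAsub : A ⊆ E' := Finset.filter_subset _ _
    have hAcard : A.card = h := by omega
    set L := A.toList ++ (E' \ A).toList with hL
    have hlen : L.length = m := by
      rw [hL]
      simp only [List.length_append, Finset.length_toList]
      rw [Finset.card_sdiff_of_subset hAsub, hE'card]
      omega
    have hnd : L.Nodup := by
      refine List.Nodup.append (Finset.nodup_toList _) (Finset.nodup_toList _) ?_
      intro x hx hx'
      rw [Finset.mem_toList] at hx hx'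
      exact (Finset.mem_sdiff.mp hx').2 hx
    have hmemL : {x | x ∈ L} = M.E := by
      ext x
      simp only [hL, Set.mem_setOf_eq, List.mem_append, Finset.mem_toList, Finset.mem_sdiff]
      rw [← hE'mem x]
      constructor
      · rintro (hx | ⟨hx, -⟩)
        · exact hAsub hx
        · exact hx
      · intro hx
        by_cases hxA : x ∈ A
        · exact Or.inl hxA
        · exact Or.inr ⟨hx, hxA⟩
    have hgetA : ∀ p, p < h → M.closure {L.getD p d} = M.closure {e} := by
      intro p hph
      have hp' : p < A.toList.length := by rw [Finset.length_toList, hAcard]; omega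
      have hx : L.getD p d = A.toList[p] := by
        rw [List.getD_eq_getElem L d (by omega)]
        exact List.getElem_append_left hp'
      rw [hx]
      have hmemA : A.toList[p] ∈ A := by rw [← Finset.mem_toList]; exact List.getElem_mem _
      exact (Finset.mem_filter.mp hmemA).2
    have hgetB : ∀ p, p < m → h ≤ p → M.closure {L.getD p d} ≠ M.closure {e} := by
      intro p hp hph
      have hple : A.toList.length ≤ p := by rw [Finset.length_toList, hAcard]; omega
      have hx : L.getD p d = (E' \ A).toList[p - A.toList.length]'(by
          simp only [Finset.length_toList]
          rw [Finset.card_sdiff_of_subset hAsub, hE'card]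
          omega) := by
        rw [List.getD_eq_getElem L d (by omega)]
        exact List.getElem_append_right hple
      intro hcl
      have hmemB : L.getD p d ∈ E' \ A := by
        rw [hx, ← Finset.mem_toList]; exact List.getElem_mem _
      rw [Finset.mem_sdiff] at hmemB
      exact hmemB.2 (Finset.mem_filter.mpr ⟨hmemB.1, hcl⟩)
    apply main L hlen hnd hmemL
    intro j hj
    have hkey : ∀ p q : ℕ, q < m → p < h → h ≤ q →
        M.closure {L.getD p d} ≠ M.closure {L.getD q d} := by
      intro p q hq hph hqh heq
      exact hgetB q hq hqh (by rw [← heq]; exact hgetA p hph)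
    by_cases h1 : j + 1 = m
    · have hm0 : (j + 1) % m = 0 := by rw [h1, Nat.mod_self]
      have hjodd : j % 2 = 1 := by omega
      rw [hm0, hfeven 0 (by omega), hfodd j hjodd]
      exact (hkey 0 (h + j / 2) (by omega) (by omega) (by omega)).symm
    · have hm1 : (j + 1) % m = j + 1 := Nat.mod_eq_of_lt (by omega)
      rcases Nat.mod_two_eq_zero_or_one j with hp | hp
      · rw [hm1, hfeven j hp, hfodd (j + 1) (by omega)]
        exact hkey (j / 2) (h + (j + 1) / 2) (by omega) (by omega) (by omega)
      · rw [hm1, hfodd j hp, hfeven (j + 1) (by omega)]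
        exact (hkey ((j + 1) / 2) (h + j / 2) (by omega) (by omega) (by omega)).symm
  · -- Case A : all classes have size at most h - 1; sort by class
    push_neg at hcaseB
    have hfible : ∀ x ∈ M.E,
        (E'.filter (fun y => M.closure {y} = M.closure {x})).card ≤ h - 1 := by
      intro x hx
      have h1 := hfibcard x hx
      have h2 := hcaseB x hx
      have h3 : x ∈ E'.filter (fun y => M.closure {y} = M.closure {x}) :=
        Finset.mem_filter.mpr ⟨(hE'mem x).2 hx, rfl⟩
      have h4 : 1 ≤ (E'.filter (fun y => M.closure {y} = M.closure {x})).card :=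
        Finset.card_pos.mpr ⟨x, h3⟩
      omega
    set key : α → ℕ := fun a => List.idxOf (M.closure {a}) (E'.image (fun x => M.closure {x})).toList with hkeydef
    set L := E'.toList.mergeSort (fun a b => decide (key a ≤ key b)) with hL
    have hperm : L.Perm E'.toList := List.mergeSort_perm _ _
    have hlen : L.length = m := by rw [hperm.length_eq, Finset.length_toList, hE'card]
    have hnd : L.Nodup := hperm.nodup_iff.mpr (Finset.nodup_toList _)
    have hmemL : {x | x ∈ L} = M.E := by
      ext x
      rw [Set.mem_setOf_eq, hperm.mem_iff, Finset.mem_toList, hE'mem]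
    have hsorted : List.Pairwise (fun a b => decide (key a ≤ key b) = true) L := by
      apply List.pairwise_mergeSort
      · intro a b c h1 h2
        simp only [decide_eq_true_eq] at *
        omega
      · intro a b
        simp only [Bool.or_eq_true, decide_eq_true_eq]
        omega
    have hsorted' : ∀ p q (hp : p < L.length) (hq : q < L.length), p < q →
        key (L[p]'hp) ≤ key (L[q]'hq) := by
      intro p q hp hq hpq
      have := List.pairwise_iff_getElem.mp hsorted p q hp hq hpq
      simpa using this
    have hLE : ∀ t, t < m → L.getD t d ∈ E' := by
      intro t ht
      have hx : L.getD t d = L[t]'(by omega) := List.getD_eq_getElem L d (by omega)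
      rw [hx, ← Finset.mem_toList, ← hperm.mem_iff]
      exact List.getElem_mem _
    have hkeyinj : ∀ a ∈ E', ∀ b ∈ E', key a = key b → M.closure {a} = M.closure {b} := by
      intro a ha b hb hk
      have ha' : M.closure {a} ∈ (E'.image (fun x => M.closure {x})).toList := by
        rw [Finset.mem_toList]; exact Finset.mem_image_of_mem _ ha
      have hb' : M.closure {b} ∈ (E'.image (fun x => M.closure {x})).toList := by
        rw [Finset.mem_toList]; exact Finset.mem_image_of_mem _ hb
      exact (List.idxOf_inj (y := M.closure {b}) ha').mp hk
    -- convexity and counting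
    have hconv : ∀ p q, p < q → q < m →
        M.closure {L.getD p d} = M.closure {L.getD q d} → q - p + 1 ≤ h - 1 := by
      intro p q hpq hq hcl
      have hkeq : key (L.getD p d) = key (L.getD q d) := by
        rw [hkeydef]; simp only; rw [hcl]
      have hmid : ∀ t, p ≤ t → t ≤ q → M.closure {L.getD t d} = M.closure {L.getD p d} := by
        intro t h1t h2t
        have hgp : ∀ u v (hu : u < m) (hv : v < m), u ≤ v →
            key (L.getD u d) ≤ key (L.getD v d) := by
          intro u v hu hv huv
          rcases eq_or_lt_of_le huv with rfl | hlt
          · exact le_refl _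
          · have e1 : L.getD u d = L[u]'(by omega) := List.getD_eq_getElem L d (by omega)
            have e2 : L.getD v d = L[v]'(by omega) := List.getD_eq_getElem L d (by omega)
            rw [e1, e2]
            exact hsorted' u v (by omega) (by omega) hlt
        have k1 := hgp p t (by omega) (by omega) h1t
        have k2 := hgp t q (by omega) (by omega) h2t
        apply hkeyinj _ (hLE t (by omega)) _ (hLE p (by omega))
        omega
      have hcard : (Finset.Icc p q).card ≤
          (E'.filter (fun y => M.closure {y} = M.closure {L.getD p d})).card := by
        apply Finset.card_le_card_of_injOn (fun t => L.getD t d)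
        · intro t ht
          rw [Finset.mem_coe, Finset.mem_Icc] at ht
          exact Finset.mem_filter.mpr ⟨hLE t (by omega), hmid t ht.1 ht.2⟩
        · intro s hs t ht hst
          simp only [Finset.coe_Icc, Set.mem_Icc] at hs ht
          have e1 : L.getD s d = L[s]'(by omega) := List.getD_eq_getElem L d (by omega)
          have e2 : L.getD t d = L[t]'(by omega) := List.getD_eq_getElem L d (by omega)
          have hst' : L.getD s d = L.getD t d := hst
          rw [e1, e2] at hst'
          exact (List.Nodup.getElem_inj_iff hnd).mp hst'
      have hFle := hfible (L.getD p d) ((hE'mem _).1 (hLE p (by omega)))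
      rw [Nat.card_Icc] at hcard
      omega
    apply main L hlen hnd hmemL
    intro j hj heq
    have hjm : (j + 1) % m < m := Nat.mod_lt _ (by omega)
    have hne : f j ≠ f ((j + 1) % m) := by
      intro hfe
      have hje := hfinj j hj ((j + 1) % m) hjm hfe
      by_cases h1 : j + 1 = m
      · rw [h1, Nat.mod_self] at hje; omega
      · rw [Nat.mod_eq_of_lt (by omega)] at hje; omega
    have hgap : f j + (h - 1) ≤ f ((j + 1) % m) ∨ f ((j + 1) % m) + (h - 1) ≤ f j := by
      by_cases h1 : j + 1 = m
      · have hm0 : (j + 1) % m = 0 := by rw [h1, Nat.mod_self]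
        rw [hm0, hfeven 0 (by omega)]
        rcases Nat.mod_two_eq_zero_or_one j with hp | hp
        · rw [hfeven j hp]; omega
        · rw [hfodd j hp]; omega
      · have hm1 : (j + 1) % m = j + 1 := Nat.mod_eq_of_lt (by omega)
        rw [hm1]
        rcases Nat.mod_two_eq_zero_or_one j with hp | hp
        · rw [hfeven j hp, hfodd (j + 1) (by omega)]; omega
        · rw [hfodd j hp, hfeven (j + 1) (by omega)]; omega
    rcases lt_or_gt_of_ne hne with hlt | hlt
    · have := hconv (f j) (f ((j + 1) % m)) hlt (hfb _ hjm) heq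
      omega
    · have := hconv (f ((j + 1) % m)) (f j) hlt (hfb j hj) heq.symm
      omega
end

section
/- Let M be a paving matroid of rank r with basis S = {s1,...,sr} such that M\S has rank r, and let e1 e2 ... em be a cyclic ordering of M\S. Fix j and define x_t = e_{j-t} and y_t = e_{j+t-1} (indices mod m), X = {x1,...,x_{r-1}}, Y = {y1,...,y_{r-1}}. Let H1 be the collection of sets C ∩ S where C is an r-circuit of M with {x1,...,xi} ⊂ C ⊆ {x1,...,xi} ∪ S for some i ∈ [r-1], and H2 likewise with the y's. Then: if A, B ∈ H1 with |A| = |B| + 1 and B ⊂ A, then every |B|-subset of A is in H1 (and similarly for H2). -/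
open Set

variable {α : Type*}

/-- `Xset e j i = {x₁, …, xᵢ}` where `xₜ = e_{j - t}` (indices mod `m`). -/
def Xset {m : ℕ} (e : ZMod m → α) (j : ZMod m) (i : ℕ) : Set α :=
  {a | ∃ t : ℕ, 1 ≤ t ∧ t ≤ i ∧ a = e (j - (t : ZMod m))}

/-- `Yset e j i = {y₁, …, yᵢ}` where `yₜ = e_{j + t - 1}` (indices mod `m`). -/
def Yset {m : ℕ} (e : ZMod m → α) (j : ZMod m) (i : ℕ) : Set α :=
  {a | ∃ t : ℕ, 1 ≤ t ∧ t ≤ i ∧ a = e (j + (t : ZMod m) - 1)}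

/-- The family of traces on `S` of `r`-circuits `C` with
`Z i ⊆ C ⊆ Z i ∪ S` for some `i ∈ [r-1]`. -/
def Hcol (M : Matroid α) (S : Set α) (r : ℕ) (Z : ℕ → Set α) : Set (Set α) :=
  {T | ∃ C, ∃ i : ℕ, 1 ≤ i ∧ i ≤ r - 1 ∧ M.IsCircuitMin C ∧ C.ncard = r ∧
    Z i ⊆ C ∧ C ⊆ Z i ∪ S ∧ T = C ∩ S}

/-- Property (S1) for a family of sets. -/
def PropS1Set (𝒮 : Set (Set α)) : Prop :=
  ∀ A ∈ 𝒮, ∀ B ∈ 𝒮, A.ncard = B.ncard + 1 → B ⊂ A →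
    ∀ C ⊆ A, C.ncard = B.ncard → C ∈ 𝒮

lemma exists_circuit_subset' (M : Matroid α) :
    ∀ n (D : Set α), D.Finite → D.ncard ≤ n → M.Dep D →
      ∃ C, C ⊆ D ∧ M.IsCircuitMin C := by
  intro n
  induction n with
  | zero =>
    intro D hfin hcard hdep
    exact absurd (ncard_eq_zero hfin |>.mp (Nat.le_zero.mp hcard) ▸ hdep)
      (fun h => h.1 M.empty_indep)
  | succ n ih =>
    intro D hfin hcard hdep
    by_cases h : ∀ D', D' ⊂ D → M.Indep D'
    · exact ⟨D, subset_rfl, hdep, h⟩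
    · push_neg at h
      obtain ⟨D', hD', hind⟩ := h
      have hdep' : M.Dep D' := ⟨hind, hD'.subset.trans hdep.subset_ground⟩
      obtain ⟨C, hC, hcirc⟩ := ih D' (hfin.subset hD'.subset)
        (by have := Set.ncard_lt_ncard hD' hfin; omega) hdep'
      exact ⟨C, hC.trans hD'.subset, hcirc⟩

lemma key (M : Matroid α) (S : Set α) (hpav : M.Paving)
    (Z : ℕ → Set α) (hmono : Monotone Z) (hdisj : ∀ i, Disjoint (Z i) S) :
    PropS1Set (Hcol M S M.rank Z) := by
  set r := M.rank with hr
  rintro A ⟨CA, iA, hiA1, hiA2, hcircA, hcardA, hZA, hAZ, rfl⟩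
  rintro B ⟨CB, iB, hiB1, hiB2, hcircB, hcardB, hZB, hBZ, rfl⟩
  intro hcard hBA D hDA hDcard
  have hr2 : 2 ≤ r := by omega
  -- finiteness
  have hfinA : CA.Finite := by
    apply Set.finite_of_ncard_ne_zero; omega
  have hfinB : CB.Finite := by
    apply Set.finite_of_ncard_ne_zero; omega
  -- decompositions
  have hdecA : CA = Z iA ∪ (CA ∩ S) := by
    apply subset_antisymm
    · intro a ha
      rcases hAZ ha with h | h
      · exact Or.inl h
      · exact Or.inr ⟨ha, h⟩
    · exact union_subset hZA inter_subset_left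
  have hdecB : CB = Z iB ∪ (CB ∩ S) := by
    apply subset_antisymm
    · intro a ha
      rcases hBZ ha with h | h
      · exact Or.inl h
      · exact Or.inr ⟨ha, h⟩
    · exact union_subset hZB inter_subset_left
  have hdisjA : Disjoint (Z iA) (CA ∩ S) := (hdisj iA).mono_right inter_subset_right
  have hdisjB : Disjoint (Z iB) (CB ∩ S) := (hdisj iB).mono_right inter_subset_right
  have hsumA : (Z iA).ncard + (CA ∩ S).ncard = r := by
    rw [← Set.ncard_union_eq hdisjA (hfinA.subset hZA) (hfinA.subset inter_subset_left),
      ← hdecA, hcardA]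
  have hsumB : (Z iB).ncard + (CB ∩ S).ncard = r := by
    rw [← Set.ncard_union_eq hdisjB (hfinB.subset hZB) (hfinB.subset inter_subset_left),
      ← hdecB, hcardB]
  have hZcard : (Z iB).ncard = (Z iA).ncard + 1 := by omega
  -- iA ≤ iB
  have hiAB : iA ≤ iB := by
    by_contra h
    have hsub : Z iB ⊆ Z iA := hmono (by omega)
    have := Set.ncard_le_ncard hsub (hfinA.subset hZA)
    omega
  have hsub : Z iA ⊆ Z iB := hmono hiAB
  -- the new element x
  have hdiff : (Z iB \ Z iA).ncard = 1 := by
    rw [Set.ncard_diff hsub (hfinA.subset hZA)]; omega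
  obtain ⟨x, hx⟩ := Set.ncard_eq_one.mp hdiff
  have hxB : x ∈ Z iB := by
    have : x ∈ Z iB \ Z iA := hx ▸ rfl; exact this.1
  have hxA : x ∉ Z iA := by
    have : x ∈ Z iB \ Z iA := hx ▸ rfl; exact this.2
  have hZBeq : Z iB = insert x (Z iA) := by
    apply subset_antisymm
    · intro b hb
      by_cases hbA : b ∈ Z iA
      · exact Or.inr hbA
      · have : b ∈ Z iB \ Z iA := ⟨hb, hbA⟩
        rw [hx] at this; exact Or.inl this
    · exact insert_subset hxB hsub
  -- the removed element a
  have hfinAS : (CA ∩ S).Finite := hfinA.subset inter_subset_left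
  have hDssub : D ⊂ CA ∩ S := by
    refine ssubset_of_subset_of_ne hDA fun h => ?_
    rw [h] at hDcard; omega
  obtain ⟨a, haA, haD⟩ := exists_of_ssubset hDssub
  have hainsert : insert a D = CA ∩ S := by
    apply Set.eq_of_subset_of_ncard_le (insert_subset haA hDA) _ hfinAS
    rw [Set.ncard_insert_of_notMem haD (hfinAS.subset hDA.subset)]
    omega
  have haCA : a ∈ CA := haA.1
  have haS : a ∈ S := haA.2
  -- the independent set I
  set I := CA \ {a} with hI
  have hIind : M.Indep I := hcircA.2 I (sdiff_singleton_ssubset.mpr haCA)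
  have hIE : I ⊆ M.E := hIind.subset_ground
  have hICA : insert a I = CA := insert_diff_singleton.trans (by rw [insert_eq_of_mem haCA])
  have haclI : a ∈ M.closure I := by
    rw [hIind.mem_closure_iff]
    exact Or.inl (hICA ▸ hcircA.1)
  have hCAcl : CA ⊆ M.closure I := by
    rw [← hICA]
    exact insert_subset haclI (M.subset_closure I hIE)
  have hclCA : M.closure CA ⊆ M.closure I :=
    M.closure_subset_closure_of_subset_closure hCAcl
  -- x ∈ closure I
  have hxcl : x ∈ M.closure I := by
    have hJind : M.Indep (CB \ {x}) := hcircB.2 _ (sdiff_singleton_ssubset.mpr (hZB hxB))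
    have hxclJ : x ∈ M.closure (CB \ {x}) := by
      rw [hJind.mem_closure_iff]
      refine Or.inl ?_
      rw [insert_diff_singleton, insert_eq_of_mem (hZB hxB)]; exact hcircB.1
    have hJCA : CB \ {x} ⊆ CA := by
      intro b hb
      have hbCB := hb.1
      have hbx : b ≠ x := hb.2
      rw [hdecB] at hbCB
      rcases hbCB with h | h
      · rw [hZBeq] at h
        rcases h with h | h
        · exact absurd h hbx
        · exact hZA h
      · exact (hBA.subset h).1
    exact hclCA (M.closure_subset_closure hJCA hxclJ)
  -- the new circuit candidate
  set C' := Z iB ∪ D with hC'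
  have hDS : D ⊆ S := hDA.trans inter_subset_right
  have hDI : D ⊆ I := by
    intro b hb
    exact ⟨(hDA hb).1, fun h => haD (h ▸ hb)⟩
  have hC'cl : C' ⊆ M.closure I := by
    rw [hC', hZBeq]
    refine union_subset (insert_subset hxcl ?_) (hDI.trans (M.subset_closure I hIE))
    intro b hb
    exact M.subset_closure I hIE ⟨hZA hb, fun h => (hdisj iA).ne_of_mem hb haS (by simpa using h)⟩
  have hC'E : C' ⊆ M.E := hC'cl.trans (M.closure_subset_ground I)
  have hC'fin : C'.Finite := (hfinB.subset hZB).union (hfinAS.subset hDA)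
  have hC'card : C'.ncard = r := by
    rw [hC', Set.ncard_union_eq ((hdisj iB).mono_right hDS) (hfinB.subset hZB)
      (hfinAS.subset hDA)]
    omega
  have hIfin : I.Finite := hfinA.subset diff_subset
  have hIcard : I.ncard = r - 1 := by
    rw [hI, Set.ncard_diff_singleton_of_mem haCA, hcardA]
  -- C' is dependent
  have hC'dep : M.Dep C' := by
    refine ⟨fun (hind : M.Indep C') => ?_, hC'E⟩
    obtain ⟨J', hJ', hJJ'⟩ := hind.subset_isBasis_of_subset hC'cl
      (M.closure_subset_ground I)
    have hle : C'.encard ≤ I.encard :=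
      le_of_le_of_eq (encard_mono hJJ') (hJ'.encard_eq_encard hIind.isBasis_closure)
    have : C'.ncard ≤ I.ncard := by
      rw [Set.ncard_def, Set.ncard_def]
      exact ENat.toNat_le_toNat hle hIfin.encard_lt_top.ne
    omega
  -- C' is a circuit
  obtain ⟨C'', hC''sub, hC''circ⟩ :=
    exists_circuit_subset' M C'.ncard C' hC'fin le_rfl hC'dep
  have hC''eq : C'' = C' := by
    apply Set.eq_of_subset_of_ncard_le hC''sub _ hC'fin
    rw [hC'card]; exact hpav C'' hC''circ
  have hC'circ : M.IsCircuitMin C' := hC''eq ▸ hC''circ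
  -- conclude
  refine ⟨C', iB, hiB1, hiB2, hC'circ, hC'card, subset_union_left, ?_, ?_⟩
  · exact union_subset_union_right _ hDS
  · rw [hC', union_inter_distrib_right, (hdisj iB).inter_eq,
      inter_eq_self_of_subset_left hDS, empty_union]

/-- Claim: the families `H₁, H₂` built from the circuits meeting the elements on
either side of position `j` in a cyclic ordering of `M \ S` satisfy property (S1). -/
theorem stmt15 (M : Matroid α) (S : Set α) (hS : M.IsBase S) (hpav : M.Paving)
    (hrd : (M.del S).rank = M.rank)
    (m : ℕ) (hm : 0 < m) (e : ZMod m → α) (he : Function.Injective e)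
    (hrange : Set.range e = M.E \ S)
    (hbase : ∀ i : ZMod m,
      (M.del S).IsBase (e '' {a | ∃ t : ℕ, t < M.rank ∧ a = i + (t : ZMod m)}))
    (j : ZMod m) :
    PropS1Set (Hcol M S M.rank (Xset e j)) ∧
      PropS1Set (Hcol M S M.rank (Yset e j)) := by
  have hdX : ∀ i, Disjoint (Xset e j i) S := by
    intro i
    rw [Set.disjoint_left]
    rintro a ⟨t, ht1, ht2, rfl⟩
    have : e (j - (t : ZMod m)) ∈ Set.range e := ⟨_, rfl⟩
    rw [hrange] at this
    exact this.2
  have hdY : ∀ i, Disjoint (Yset e j i) S := by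
    intro i
    rw [Set.disjoint_left]
    rintro a ⟨t, ht1, ht2, rfl⟩
    have : e (j + (t : ZMod m) - 1) ∈ Set.range e := ⟨_, rfl⟩
    rw [hrange] at this
    exact this.2
  have hmX : Monotone (Xset e j) := by
    rintro i i' hii a ⟨t, ht1, ht2, rfl⟩
    exact ⟨t, ht1, ht2.trans hii, rfl⟩
  have hmY : Monotone (Yset e j) := by
    rintro i i' hii a ⟨t, ht1, ht2, rfl⟩
    exact ⟨t, ht1, ht2.trans hii, rfl⟩
  exact ⟨key M S hpav _ hmX hdX, key M S hpav _ hmY hdY⟩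
end
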